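/- arXiv:1603.08271 — 2 statements merged into one kernel-verified Lean document; each statement's English description precedes it below -/
import Mathlib

section
/- For every ε > 0, the function ξ ↦ (1+ξ²)^{ε/2} · (1+ξ²)^{-1/4} (1 + log(1+ξ²))^{-2} does not belong to L²(ℝ); that is, ∫_ℝ (1+ξ²)^{ε - 1/2} (1 + log(1+ξ²))^{-4} dξ = ∞. -/
set_option maxHeartbeats 1000000

open MeasureTheory Real Filter

lemma aux_not_L2 (ε : ℝ) (hε : 0 < ε) (hε1 : ε ≤ 1) :
    ¬ Integrable (fun ξ : ℝ =>
      (1 + ξ ^ 2) ^ (ε - 1 / 2) * (1 + Real.log (1 + ξ ^ 2)) ^ (-(4 : ℝ))) := by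
  intro h
  set f : ℝ → ℝ := fun ξ : ℝ =>
      (1 + ξ ^ 2) ^ (ε - 1 / 2) * (1 + Real.log (1 + ξ ^ 2)) ^ (-(4 : ℝ)) with hf
  -- eventual bound in u : (1+log u)^4 ≤ u^(ε/2)
  have hε8 : (0:ℝ) < ε/8 := by linarith
  have hlogu : ∀ᶠ u : ℝ in atTop, (1 + Real.log u) ^ (4:ℝ) ≤ u ^ (ε/2) := by
    have h1 := (isLittleO_log_rpow_atTop hε8).def (by norm_num : (0:ℝ) < 1/2)
    have h2 := (tendsto_rpow_atTop hε8).eventually_ge_atTop 2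
    filter_upwards [h1, h2, eventually_ge_atTop (1:ℝ)] with u hu1 hu2 hu3
    have hu0 : (0:ℝ) < u := lt_of_lt_of_le one_pos hu3
    have hlog0 : 0 ≤ Real.log u := Real.log_nonneg hu3
    have hr0 : 0 ≤ u ^ (ε/8) := Real.rpow_nonneg hu0.le _
    have hb : 1 + Real.log u ≤ u ^ (ε/8) := by
      rw [Real.norm_eq_abs, Real.norm_eq_abs, abs_of_nonneg hlog0, abs_of_nonneg hr0] at hu1
      linarith
    calc (1 + Real.log u) ^ (4:ℝ) ≤ (u ^ (ε/8)) ^ (4:ℝ) :=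
          Real.rpow_le_rpow (by linarith) hb (by norm_num)
      _ = u ^ (ε/2) := by
          rw [← Real.rpow_mul hu0.le]
          congr 1
          ring
  have htend : Tendsto (fun ξ : ℝ => 1 + ξ ^ 2) atTop atTop :=
    tendsto_atTop_add_const_left _ 1 (tendsto_pow_atTop (by norm_num))
  have hε4 : (0:ℝ) < ε/4 := by linarith
  -- eventual bound : ξ ^ (3ε/4-1) ≤ f ξ
  have hev : ∀ᶠ ξ : ℝ in atTop, ξ ^ (3*ε/4 - 1) ≤ f ξ := by
    filter_upwards [htend.eventually hlogu,
      (tendsto_rpow_atTop hε4).eventually_ge_atTop 2, eventually_ge_atTop (1:ℝ)]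
      with ξ h1 h2 h3
    have hξ0 : (0:ℝ) < ξ := lt_of_lt_of_le one_pos h3
    have hu0 : (0:ℝ) < 1 + ξ ^ 2 := by positivity
    have hl0 : (0:ℝ) < 1 + Real.log (1 + ξ ^ 2) := by
      have := Real.log_nonneg (by nlinarith : (1:ℝ) ≤ 1 + ξ ^ 2)
      linarith
    have step1 : (1 + ξ ^ 2) ^ (ε - 1/2) * (1 + ξ ^ 2) ^ (-(ε/2)) ≤ f ξ := by
      apply mul_le_mul_of_nonneg_left _ (Real.rpow_nonneg hu0.le _)
      rw [Real.rpow_neg hu0.le, Real.rpow_neg hl0.le]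
      exact inv_anti₀ (Real.rpow_pos_of_pos hl0 _) h1
    rw [← Real.rpow_add hu0] at step1
    have e1 : ε - 1/2 + -(ε/2) = (ε-1)/2 := by ring
    rw [e1] at step1
    have step2 : ((2:ℝ) * ξ ^ 2) ^ ((ε-1)/2) ≤ (1 + ξ ^ 2) ^ ((ε-1)/2) := by
      apply Real.rpow_le_rpow_of_nonpos hu0 (by nlinarith) (by linarith)
    have e2 : ((2:ℝ) * ξ ^ 2) ^ ((ε-1)/2) = 2 ^ ((ε-1)/2) * ξ ^ (ε-1) := by
      rw [Real.mul_rpow (by norm_num) (by positivity), ← Real.rpow_natCast ξ 2,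
        ← Real.rpow_mul hξ0.le]
      congr 1
      push_cast
      ring
    have step3 : ξ ^ (-(ε/4)) * ξ ^ (ε-1) ≤ 2 ^ ((ε-1)/2) * ξ ^ (ε-1) := by
      apply mul_le_mul_of_nonneg_right _ (Real.rpow_nonneg hξ0.le _)
      rw [Real.rpow_neg hξ0.le]
      rw [show ((ε:ℝ)-1)/2 = -((1-ε)/2) by ring, Real.rpow_neg (by norm_num)]
      apply inv_anti₀ (Real.rpow_pos_of_pos two_pos _)
      calc (2:ℝ) ^ ((1-ε)/2) ≤ 2 ^ (1:ℝ) :=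
            Real.rpow_le_rpow_of_exponent_le (by norm_num) (by linarith)
        _ = 2 := by norm_num
        _ ≤ ξ ^ (ε/4) := h2
    have e3 : ξ ^ (-(ε/4)) * ξ ^ (ε-1) = ξ ^ (3*ε/4 - 1) := by
      rw [← Real.rpow_add hξ0]; ring_nf
    calc ξ ^ (3*ε/4 - 1) = ξ ^ (-(ε/4)) * ξ ^ (ε-1) := e3.symm
      _ ≤ 2 ^ ((ε-1)/2) * ξ ^ (ε-1) := step3
      _ = ((2:ℝ) * ξ ^ 2) ^ ((ε-1)/2) := e2.symm
      _ ≤ (1 + ξ ^ 2) ^ ((ε-1)/2) := step2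
      _ ≤ f ξ := step1
  obtain ⟨R, hR⟩ := (hev.and (eventually_ge_atTop (1:ℝ))).exists_forall_of_atTop
  have hint : IntegrableOn (fun ξ : ℝ => ξ ^ (3*ε/4-1)) (Set.Ioi (max R 1)) := by
    have hIO : IntegrableOn f (Set.Ioi (max R 1)) := h.integrableOn
    apply hIO.mono'
    · refine ContinuousOn.aestronglyMeasurable (fun x hx => ?_) measurableSet_Ioi
      have hx0 : (0:ℝ) < x := lt_of_lt_of_le (lt_of_lt_of_le one_pos (le_max_right R 1)) hx.le
      exact (Real.continuousAt_rpow_const x _ (Or.inl hx0.ne')).continuousWithinAt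
    · rw [ae_restrict_iff' measurableSet_Ioi]
      filter_upwards with ξ hξ
      have hξ1 : (1:ℝ) ≤ ξ := le_of_lt (lt_of_le_of_lt (le_max_right R 1) hξ)
      have hb := (hR ξ (le_of_lt (lt_of_le_of_lt (le_max_left R 1) hξ))).1
      rw [Real.norm_eq_abs, abs_of_nonneg (Real.rpow_nonneg (by linarith) _)]
      exact hb
  rw [integrableOn_Ioi_rpow_iff (lt_of_lt_of_le one_pos (le_max_right R 1))] at hint
  linarith

theorem lambda_eps_eta_not_L2 (ε : ℝ) (hε : 0 < ε) :
    ¬ Integrable (fun ξ : ℝ =>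
      (1 + ξ ^ 2) ^ (ε - 1 / 2) * (1 + Real.log (1 + ξ ^ 2)) ^ (-(4 : ℝ))) := by
  intro h
  set ε' := min ε 1 with hε'
  have hε'0 : 0 < ε' := lt_min hε one_pos
  have hε'1 : ε' ≤ 1 := min_le_right _ _
  apply aux_not_L2 ε' hε'0 hε'1
  apply h.mono'
  · apply Continuous.aestronglyMeasurable
    apply Continuous.mul
    · exact (continuous_const.add (continuous_pow 2)).rpow_const
        (fun x => Or.inl (by simp only [Pi.add_apply]; positivity))
    · refine (continuous_const.add ((continuous_const.add (continuous_pow 2)).log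
        (fun x => by simp only [Pi.add_apply]; positivity))).rpow_const (fun x => Or.inl ?_)
      have : (0:ℝ) ≤ Real.log (1 + x ^ 2) := Real.log_nonneg (by nlinarith)
      simp only [Pi.add_apply]; exact ne_of_gt (by linarith)
  · filter_upwards with ξ
    have hu1 : (1:ℝ) ≤ 1 + ξ ^ 2 := by nlinarith
    have hl0 : (0:ℝ) < 1 + Real.log (1 + ξ ^ 2) := by
      have := Real.log_nonneg hu1; linarith
    rw [Real.norm_eq_abs, abs_of_nonneg (by positivity)]
    apply mul_le_mul_of_nonneg_right _ (Real.rpow_nonneg hl0.le _)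
    exact Real.rpow_le_rpow_of_exponent_le hu1 (by
      have : ε' ≤ ε := min_le_left _ _; linarith)
end

section
/- Let ε ∈ (0, 1/2], m ≥ 1, and let C₁ > 0, T > 0. For ξ ≥ M and x ≤ -1, suppose |D(ξ)| ≥ max(C₁ ξ^{2m} T + |x|, 1) and consider h(ξ) = ((1+ξ²)^{ε/2} χ(ξ)) / (D(ξ) (1+ξ²)^{1/4} (1+log(1+ξ²))²) where χ : ℝ → [0,1] is C^∞ with |χ'| ≤ K uniformly. Then |h'(ξ)|, after using |D'(ξ)| ≤ C₃ ξ^{2m-1} T, is bounded by C/(ξ^{2m} + 1) with C independent of the cutoff parameter, and hence ∫_M^∞ |h'(ξ)| dξ ≤ C' < ∞ uniformly. -/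
open MeasureTheory Real

private lemma amplitude_est (α K e c₀ X A dA c dc P dP L dL d d' : ℝ)
    (hα : 0 ≤ α) (hK : 0 ≤ K) (he : 0 ≤ e) (hc₀ : 0 < c₀) (hX : 0 ≤ X)
    (hA0 : 0 ≤ A) (hAP : A ≤ P) (hdA : |dA| ≤ α * P)
    (hc01 : |c| ≤ 1) (hdc : |dc| ≤ K)
    (hP1 : 1 ≤ P) (hdP : |dP| ≤ P / 2)
    (hL1 : 1 ≤ L) (hdL : |dL| ≤ 4 * L)
    (hdlow : c₀ * (X + 1) ≤ |d|) (hd' : |d'| ≤ e * |d|) :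
    |(dA * c + A * dc) * (d * P * L) -
        A * c * ((d' * P + d * dP) * L + d * P * dL)| / (d * P * L) ^ 2
      ≤ (α + K + 9 / 2 + e) / c₀ / (X + 1) := by
  have hX1 : (0:ℝ) < X + 1 := by linarith
  have hd0 : 0 < |d| := lt_of_lt_of_le (by positivity) hdlow
  have hdne : d ≠ 0 := abs_pos.mp hd0
  have hP0 : (0:ℝ) < P := by linarith
  have hL0 : (0:ℝ) < L := by linarith
  have hAc : |A * c| ≤ P := by
    rw [abs_mul, abs_of_nonneg hA0]
    calc A * |c| ≤ P * 1 := mul_le_mul hAP hc01 (abs_nonneg _) hP0.le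
      _ = P := mul_one P
  have h1 : |dA * c + A * dc| ≤ (α + K) * P := by
    calc |dA * c + A * dc| ≤ |dA| * |c| + |A| * |dc| := by
          rw [← abs_mul, ← abs_mul]; exact abs_add_le _ _
      _ ≤ (α * P) * 1 + P * K := by
          apply add_le_add
          · exact mul_le_mul hdA hc01 (abs_nonneg _) (by positivity)
          · rw [abs_of_nonneg hA0]; exact mul_le_mul hAP hdc (abs_nonneg _) hP0.le
      _ = (α + K) * P := by ring
  have h2 : |(d' * P + d * dP) * L + d * P * dL| ≤ (e + 9 / 2) * |d| * (P * L) := by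
    calc |(d' * P + d * dP) * L + d * P * dL|
        ≤ |(d' * P + d * dP) * L| + |d * P * dL| := abs_add_le _ _
      _ = |d' * P + d * dP| * L + (|d| * P) * |dL| := by
          rw [abs_mul, abs_mul, abs_mul, abs_of_pos hP0, abs_of_pos hL0]
      _ ≤ (|d'| * P + |d| * (P / 2)) * L + (|d| * P) * (4 * L) := by
          apply add_le_add
          · apply mul_le_mul_of_nonneg_right _ hL0.le
            calc |d' * P + d * dP| ≤ |d'| * |P| + |d| * |dP| := by
                  rw [← abs_mul, ← abs_mul]; exact abs_add_le _ _
              _ ≤ |d'| * P + |d| * (P / 2) := by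
                  rw [abs_of_pos hP0]
                  exact add_le_add le_rfl (mul_le_mul_of_nonneg_left hdP (abs_nonneg d))
          · exact mul_le_mul_of_nonneg_left hdL (by positivity)
      _ ≤ ((e * |d|) * P + |d| * (P / 2)) * L + (|d| * P) * (4 * L) := by
          apply add_le_add _ le_rfl
          apply mul_le_mul_of_nonneg_right _ hL0.le
          exact add_le_add (mul_le_mul_of_nonneg_right hd' hP0.le) le_rfl
      _ = (e + 9 / 2) * |d| * (P * L) := by ring
  have hnum : |(dA * c + A * dc) * (d * P * L) -
      A * c * ((d' * P + d * dP) * L + d * P * dL)|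
      ≤ (α + K + 9 / 2 + e) * |d| * (P ^ 2 * L) := by
    calc |(dA * c + A * dc) * (d * P * L) -
        A * c * ((d' * P + d * dP) * L + d * P * dL)|
        ≤ |(dA * c + A * dc) * (d * P * L)| +
            |A * c * ((d' * P + d * dP) * L + d * P * dL)| := abs_sub _ _
      _ = |dA * c + A * dc| * (|d| * P * L) +
            |A * c| * |(d' * P + d * dP) * L + d * P * dL| := by
          rw [abs_mul, abs_mul, abs_mul, abs_mul, abs_of_pos hP0, abs_of_pos hL0]
      _ ≤ ((α + K) * P) * (|d| * P * L) + P * ((e + 9 / 2) * |d| * (P * L)) := by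
          apply add_le_add
          · exact mul_le_mul h1 le_rfl (by positivity) (by positivity)
          · exact mul_le_mul hAc h2 (abs_nonneg _) hP0.le
      _ = (α + K + 9 / 2 + e) * |d| * (P ^ 2 * L) := by ring
  have hG2 : (0:ℝ) < (d * P * L) ^ 2 :=
    pow_two_pos_of_ne_zero (mul_ne_zero (mul_ne_zero hdne hP0.ne') hL0.ne')
  rw [div_le_div_iff₀ hG2 hX1]
  calc |(dA * c + A * dc) * (d * P * L) -
      A * c * ((d' * P + d * dP) * L + d * P * dL)| * (X + 1)
      = (|(dA * c + A * dc) * (d * P * L) -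
          A * c * ((d' * P + d * dP) * L + d * P * dL)| * (c₀ * (X + 1))) / c₀ := by
        rw [eq_div_iff hc₀.ne']; ring
    _ ≤ ((α + K + 9 / 2 + e) * |d| * (P ^ 2 * L) * |d|) / c₀ := by
        apply (div_le_div_iff_of_pos_right hc₀).mpr
        exact mul_le_mul hnum hdlow (mul_nonneg hc₀.le hX1.le)
          (mul_nonneg (mul_nonneg (by linarith : (0:ℝ) ≤ α + K + 9 / 2 + e)
            (abs_nonneg d)) (by positivity))
    _ = (α + K + 9 / 2 + e) / c₀ * (|d| ^ 2 * (P ^ 2 * L)) := by ring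
    _ = (α + K + 9 / 2 + e) / c₀ * (d ^ 2 * (P ^ 2 * L)) := by rw [sq_abs]
    _ ≤ (α + K + 9 / 2 + e) / c₀ * ((d * P * L) ^ 2) := by
        apply mul_le_mul_of_nonneg_left _ (by positivity)
        nlinarith [mul_nonneg (mul_nonneg (sq_nonneg d) (sq_nonneg P))
          (mul_nonneg (le_trans zero_le_one hL1) (by linarith : (0:ℝ) ≤ L - 1))]

set_option maxHeartbeats 1000000 in
/-- Uniform bound on the derivative of the amplitude in the dispersive case: with
`|D(ξ)| ≥ max(C₁ ξ^{2m} T + |x|, 1)`, `|D'(ξ)| ≤ C₃ ξ^{2m-1} T` for `ξ ≥ M`, cutoffs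
`χ_n : ℝ → [0,1]` with `|χ_n'| ≤ K` uniformly, and
`h_n(ξ) = (1+ξ²)^{ε/2} χ_n(ξ) / (D(ξ)(1+ξ²)^{1/4}(1+log(1+ξ²))²)`, the derivatives
`h_n'` are bounded by `C/(ξ^{2m}+1)` uniformly in `n` and hence uniformly integrable on
`(M,∞)`. -/
theorem amplitude_derivative_uniform_bound
    (ε m C₁ C₃ T K M x : ℝ)
    (hε : 0 < ε) (hε' : ε ≤ 1 / 2) (hm : 1 ≤ m)
    (hC₁ : 0 < C₁) (hC₃ : 0 < C₃) (hT : 0 < T) (hK : 0 < K) (hM : 1 ≤ M)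
    (hx : x ≤ -1)
    (D D' : ℝ → ℝ) (hD : ∀ ξ : ℝ, HasDerivAt D (D' ξ) ξ)
    (hDlow : ∀ ξ : ℝ, M ≤ ξ → max (C₁ * ξ ^ (2 * m) * T + |x|) 1 ≤ |D ξ|)
    (hD'bd : ∀ ξ : ℝ, M ≤ ξ → |D' ξ| ≤ C₃ * ξ ^ (2 * m - 1) * T)
    (χ : ℕ → ℝ → ℝ) (hχ : ∀ n, ContDiff ℝ 1 (χ n))
    (hχ01 : ∀ n ξ, 0 ≤ χ n ξ ∧ χ n ξ ≤ 1)
    (hχ' : ∀ n ξ, |deriv (χ n) ξ| ≤ K) :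
    ∃ C : ℝ, 0 < C ∧
      (∀ n : ℕ, ∀ ξ : ℝ, M ≤ ξ →
        |deriv (fun ζ : ℝ => (1 + ζ ^ 2) ^ (ε / 2) * χ n ζ /
            (D ζ * (1 + ζ ^ 2) ^ (1 / 4 : ℝ) * (1 + Real.log (1 + ζ ^ 2)) ^ 2)) ξ|
          ≤ C / (ξ ^ (2 * m) + 1)) ∧
      ∃ C' : ℝ, ∀ n : ℕ,
        (∫⁻ ξ in Set.Ioi M, ENNReal.ofReal
          |deriv (fun ζ : ℝ => (1 + ζ ^ 2) ^ (ε / 2) * χ n ζ /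
            (D ζ * (1 + ζ ^ 2) ^ (1 / 4 : ℝ) * (1 + Real.log (1 + ζ ^ 2)) ^ 2)) ξ|)
          ≤ ENNReal.ofReal C' := by
  have hc₀ : (0:ℝ) < min (C₁ * T) 1 := lt_min (by positivity) one_pos
  have hCpos : (0:ℝ) < (ε + K + 9 / 2 + C₃ / C₁) / min (C₁ * T) 1 :=
    div_pos (by positivity) hc₀
  have key : ∀ (n : ℕ) (ξ : ℝ), M ≤ ξ →
      |deriv (fun ζ : ℝ => (1 + ζ ^ 2) ^ (ε / 2) * χ n ζ /
          (D ζ * (1 + ζ ^ 2) ^ (1 / 4 : ℝ) * (1 + Real.log (1 + ζ ^ 2)) ^ 2)) ξ|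
        ≤ (ε + K + 9 / 2 + C₃ / C₁) / min (C₁ * T) 1 / (ξ ^ (2 * m) + 1) := by
    intro n ξ hξ
    have hξ1 : (1:ℝ) ≤ ξ := hM.trans hξ
    have hξ0 : (0:ℝ) < ξ := by linarith
    have hu0 : (0:ℝ) < 1 + ξ ^ 2 := by positivity
    have hu1 : (1:ℝ) ≤ 1 + ξ ^ 2 := by nlinarith
    have hξu : ξ ≤ 1 + ξ ^ 2 := by nlinarith [sq_nonneg (ξ - 1)]
    have hξu1 : ξ / (1 + ξ ^ 2) ≤ 1 := (div_le_one hu0).2 hξu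
    have hℓ1 : (1:ℝ) ≤ 1 + Real.log (1 + ξ ^ 2) := by
      have := Real.log_nonneg hu1; linarith
    -- derivatives of the pieces
    have hder_u : HasDerivAt (fun ζ : ℝ => 1 + ζ ^ 2) (2 * ξ) ξ := by
      simpa using ((hasDerivAt_pow 2 ξ).const_add 1)
    have hA : HasDerivAt (fun ζ : ℝ => (1 + ζ ^ 2) ^ (ε / 2))
        (2 * ξ * (ε / 2) * (1 + ξ ^ 2) ^ (ε / 2 - 1)) ξ :=
      hder_u.rpow_const (Or.inl hu0.ne')
    have hcd : HasDerivAt (χ n) (deriv (χ n) ξ) ξ :=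
      (((hχ n).differentiable one_ne_zero) ξ).hasDerivAt
    have hPd : HasDerivAt (fun ζ : ℝ => (1 + ζ ^ 2) ^ (1 / 4 : ℝ))
        (2 * ξ * (1 / 4 : ℝ) * (1 + ξ ^ 2) ^ ((1 / 4 : ℝ) - 1)) ξ :=
      hder_u.rpow_const (Or.inl hu0.ne')
    have hlog : HasDerivAt (fun ζ : ℝ => Real.log (1 + ζ ^ 2)) (2 * ξ / (1 + ξ ^ 2)) ξ :=
      hder_u.log hu0.ne'
    have hLd : HasDerivAt (fun ζ : ℝ => (1 + Real.log (1 + ζ ^ 2)) ^ 2)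
        (2 * (1 + Real.log (1 + ξ ^ 2)) * (2 * ξ / (1 + ξ ^ 2))) ξ := by
      have h := (hlog.const_add 1).pow 2
      norm_num at h
      exact h
    have h1d : (1:ℝ) ≤ |D ξ| := le_trans (le_max_right _ 1) (hDlow ξ hξ)
    have hDne : D ξ ≠ 0 := by
      intro h; rw [h, abs_zero] at h1d; linarith
    have hPpos : (0:ℝ) < (1 + ξ ^ 2) ^ (1 / 4 : ℝ) := Real.rpow_pos_of_pos hu0 _
    have hLpos : (0:ℝ) < (1 + Real.log (1 + ξ ^ 2)) ^ 2 := by positivity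
    have hGne : D ξ * (1 + ξ ^ 2) ^ (1 / 4 : ℝ) * (1 + Real.log (1 + ξ ^ 2)) ^ 2 ≠ 0 :=
      mul_ne_zero (mul_ne_zero hDne hPpos.ne') hLpos.ne'
    have hf := (hA.mul hcd).div (((hD ξ).mul hPd).mul hLd) hGne
    have hfd : deriv (fun ζ : ℝ => (1 + ζ ^ 2) ^ (ε / 2) * χ n ζ /
        (D ζ * (1 + ζ ^ 2) ^ (1 / 4 : ℝ) * (1 + Real.log (1 + ζ ^ 2)) ^ 2)) ξ = _ := hf.deriv
    rw [hfd, abs_div, abs_pow, sq_abs]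
    -- hypotheses for the abstract estimate
    have hX0 : (0:ℝ) ≤ ξ ^ (2 * m) := Real.rpow_nonneg hξ0.le _
    have hAP : (1 + ξ ^ 2) ^ (ε / 2) ≤ (1 + ξ ^ 2) ^ (1 / 4 : ℝ) :=
      Real.rpow_le_rpow_of_exponent_le hu1 (by linarith)
    have hA0 : (0:ℝ) ≤ (1 + ξ ^ 2) ^ (ε / 2) := Real.rpow_nonneg hu0.le _
    have hdA : |2 * ξ * (ε / 2) * (1 + ξ ^ 2) ^ (ε / 2 - 1)|
        ≤ ε * (1 + ξ ^ 2) ^ (1 / 4 : ℝ) := by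
      have heq : 2 * ξ * (ε / 2) * (1 + ξ ^ 2) ^ (ε / 2 - 1)
          = ε * (1 + ξ ^ 2) ^ (ε / 2) * (ξ / (1 + ξ ^ 2)) := by
        rw [Real.rpow_sub hu0, Real.rpow_one]; ring
      rw [heq, abs_of_nonneg (mul_nonneg (by positivity) (div_nonneg hξ0.le hu0.le))]
      calc ε * (1 + ξ ^ 2) ^ (ε / 2) * (ξ / (1 + ξ ^ 2))
          ≤ ε * (1 + ξ ^ 2) ^ (ε / 2) * 1 :=
            mul_le_mul_of_nonneg_left hξu1 (by positivity)
        _ = ε * (1 + ξ ^ 2) ^ (ε / 2) := mul_one _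
        _ ≤ ε * (1 + ξ ^ 2) ^ (1 / 4 : ℝ) := mul_le_mul_of_nonneg_left hAP hε.le
    have hc01 : |χ n ξ| ≤ 1 := by
      rw [abs_of_nonneg (hχ01 n ξ).1]; exact (hχ01 n ξ).2
    have hP1 : (1:ℝ) ≤ (1 + ξ ^ 2) ^ (1 / 4 : ℝ) := Real.one_le_rpow hu1 (by norm_num)
    have hdP : |2 * ξ * (1 / 4 : ℝ) * (1 + ξ ^ 2) ^ ((1 / 4 : ℝ) - 1)|
        ≤ (1 + ξ ^ 2) ^ (1 / 4 : ℝ) / 2 := by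
      have heq : 2 * ξ * (1 / 4 : ℝ) * (1 + ξ ^ 2) ^ ((1 / 4 : ℝ) - 1)
          = (1 + ξ ^ 2) ^ (1 / 4 : ℝ) / 2 * (ξ / (1 + ξ ^ 2)) := by
        rw [Real.rpow_sub hu0, Real.rpow_one]; ring
      rw [heq, abs_of_nonneg (mul_nonneg (by positivity) (div_nonneg hξ0.le hu0.le))]
      calc (1 + ξ ^ 2) ^ (1 / 4 : ℝ) / 2 * (ξ / (1 + ξ ^ 2))
          ≤ (1 + ξ ^ 2) ^ (1 / 4 : ℝ) / 2 * 1 :=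
            mul_le_mul_of_nonneg_left hξu1 (by positivity)
        _ = (1 + ξ ^ 2) ^ (1 / 4 : ℝ) / 2 := mul_one _
    have hL1 : (1:ℝ) ≤ (1 + Real.log (1 + ξ ^ 2)) ^ 2 := by nlinarith
    have hdL : |2 * (1 + Real.log (1 + ξ ^ 2)) * (2 * ξ / (1 + ξ ^ 2))|
        ≤ 4 * (1 + Real.log (1 + ξ ^ 2)) ^ 2 := by
      have heq : 2 * (1 + Real.log (1 + ξ ^ 2)) * (2 * ξ / (1 + ξ ^ 2))
          = 4 * (1 + Real.log (1 + ξ ^ 2)) * (ξ / (1 + ξ ^ 2)) := by ring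
      rw [heq, abs_of_nonneg (mul_nonneg (by linarith) (div_nonneg hξ0.le hu0.le))]
      calc 4 * (1 + Real.log (1 + ξ ^ 2)) * (ξ / (1 + ξ ^ 2))
          ≤ 4 * (1 + Real.log (1 + ξ ^ 2)) * 1 :=
            mul_le_mul_of_nonneg_left hξu1 (by linarith)
        _ = 4 * (1 + Real.log (1 + ξ ^ 2)) := mul_one _
        _ ≤ 4 * (1 + Real.log (1 + ξ ^ 2)) ^ 2 := by nlinarith
    have hmax := le_trans (le_max_left _ 1) (hDlow ξ hξ)
    have hxabs : (1:ℝ) ≤ |x| := by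
      rw [abs_of_nonpos (by linarith : x ≤ 0)]; linarith
    have hdlow2 : min (C₁ * T) 1 * (ξ ^ (2 * m) + 1) ≤ |D ξ| := by
      have e1 : min (C₁ * T) 1 * ξ ^ (2 * m) ≤ C₁ * T * ξ ^ (2 * m) :=
        mul_le_mul_of_nonneg_right (min_le_left _ _) hX0
      have e2 : min (C₁ * T) 1 ≤ 1 := min_le_right _ _
      have e3 : C₁ * T * ξ ^ (2 * m) = C₁ * ξ ^ (2 * m) * T := by ring
      nlinarith [hmax, hxabs]
    have hd'2 : |D' ξ| ≤ C₃ / C₁ * |D ξ| := by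
      have h2 : ξ ^ (2 * m - 1) ≤ ξ ^ (2 * m) :=
        Real.rpow_le_rpow_of_exponent_le hξ1 (by linarith)
      have h3 : C₁ * ξ ^ (2 * m) * T ≤ |D ξ| := by
        have := abs_nonneg x
        linarith [hmax]
      calc |D' ξ| ≤ C₃ * ξ ^ (2 * m - 1) * T := hD'bd ξ hξ
        _ ≤ C₃ * ξ ^ (2 * m) * T := by
            apply mul_le_mul_of_nonneg_right _ hT.le
            exact mul_le_mul_of_nonneg_left h2 hC₃.le
        _ = C₃ / C₁ * (C₁ * ξ ^ (2 * m) * T) := by field_simp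
        _ ≤ C₃ / C₁ * |D ξ| := mul_le_mul_of_nonneg_left h3 (by positivity)
    exact amplitude_est ε K (C₃ / C₁) (min (C₁ * T) 1) (ξ ^ (2 * m))
      ((1 + ξ ^ 2) ^ (ε / 2)) (2 * ξ * (ε / 2) * (1 + ξ ^ 2) ^ (ε / 2 - 1))
      (χ n ξ) (deriv (χ n) ξ)
      ((1 + ξ ^ 2) ^ (1 / 4 : ℝ)) (2 * ξ * (1 / 4 : ℝ) * (1 + ξ ^ 2) ^ ((1 / 4 : ℝ) - 1))
      ((1 + Real.log (1 + ξ ^ 2)) ^ 2)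
      (2 * (1 + Real.log (1 + ξ ^ 2)) * (2 * ξ / (1 + ξ ^ 2)))
      (D ξ) (D' ξ)
      hε.le hK.le (by positivity) hc₀ hX0 hA0 hAP hdA hc01 (hχ' n ξ)
      hP1 hdP hL1 hdL hdlow2 hd'2
  refine ⟨(ε + K + 9 / 2 + C₃ / C₁) / min (C₁ * T) 1, hCpos, key,
    ∫ ξ in Set.Ioi M, (ε + K + 9 / 2 + C₃ / C₁) / min (C₁ * T) 1 * ξ ^ (-2 : ℝ),
    fun n => ?_⟩
  have hMpos : (0:ℝ) < M := by linarith
  have hbound : ∀ ξ ∈ Set.Ioi M,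
      |deriv (fun ζ : ℝ => (1 + ζ ^ 2) ^ (ε / 2) * χ n ζ /
          (D ζ * (1 + ζ ^ 2) ^ (1 / 4 : ℝ) * (1 + Real.log (1 + ζ ^ 2)) ^ 2)) ξ|
        ≤ (ε + K + 9 / 2 + C₃ / C₁) / min (C₁ * T) 1 * ξ ^ (-2 : ℝ) := by
    intro ξ hξ'
    have hξM : M ≤ ξ := le_of_lt hξ'
    have hξ1 : (1:ℝ) ≤ ξ := hM.trans hξM
    have hξ0 : (0:ℝ) < ξ := by linarith
    refine (key n ξ hξM).trans ?_
    have h2m : ξ ^ (2 : ℝ) ≤ ξ ^ (2 * m) :=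
      Real.rpow_le_rpow_of_exponent_le hξ1 (by linarith)
    have hsq : (0:ℝ) < ξ ^ (2 : ℝ) := Real.rpow_pos_of_pos hξ0 _
    have hX0 : (0:ℝ) ≤ ξ ^ (2 * m) := Real.rpow_nonneg hξ0.le _
    calc (ε + K + 9 / 2 + C₃ / C₁) / min (C₁ * T) 1 / (ξ ^ (2 * m) + 1)
        ≤ (ε + K + 9 / 2 + C₃ / C₁) / min (C₁ * T) 1 / ξ ^ (2 : ℝ) :=
          div_le_div_of_nonneg_left hCpos.le hsq (by linarith)
      _ = (ε + K + 9 / 2 + C₃ / C₁) / min (C₁ * T) 1 * ξ ^ (-2 : ℝ) := by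
          rw [Real.rpow_neg hξ0.le, div_eq_mul_inv]
  have hInt : IntegrableOn
      (fun ξ : ℝ => (ε + K + 9 / 2 + C₃ / C₁) / min (C₁ * T) 1 * ξ ^ (-2 : ℝ))
      (Set.Ioi M) :=
    (integrableOn_Ioi_rpow_of_lt (by norm_num) hMpos).const_mul _
  have hnn : 0 ≤ᵐ[volume.restrict (Set.Ioi M)]
      fun ξ : ℝ => (ε + K + 9 / 2 + C₃ / C₁) / min (C₁ * T) 1 * ξ ^ (-2 : ℝ) :=
    (ae_restrict_iff' measurableSet_Ioi).2 (ae_of_all _ fun ξ hξ' =>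
      mul_nonneg hCpos.le (Real.rpow_nonneg (by exact le_of_lt (hMpos.trans hξ')) _))
  have hmeas : Measurable fun ξ : ℝ =>
      ENNReal.ofReal ((ε + K + 9 / 2 + C₃ / C₁) / min (C₁ * T) 1 * ξ ^ (-2 : ℝ)) := by
    apply ENNReal.measurable_ofReal.comp
    exact (measurable_id.pow_const _).const_mul _ |>.comp measurable_id |>.mono le_rfl le_rfl
  calc (∫⁻ ξ in Set.Ioi M, ENNReal.ofReal
      |deriv (fun ζ : ℝ => (1 + ζ ^ 2) ^ (ε / 2) * χ n ζ /
          (D ζ * (1 + ζ ^ 2) ^ (1 / 4 : ℝ) * (1 + Real.log (1 + ζ ^ 2)) ^ 2)) ξ|)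
      ≤ ∫⁻ ξ in Set.Ioi M, ENNReal.ofReal
          ((ε + K + 9 / 2 + C₃ / C₁) / min (C₁ * T) 1 * ξ ^ (-2 : ℝ)) :=
        setLIntegral_mono hmeas fun ξ hξ' => ENNReal.ofReal_le_ofReal (hbound ξ hξ')
    _ = ENNReal.ofReal (∫ ξ in Set.Ioi M,
          (ε + K + 9 / 2 + C₃ / C₁) / min (C₁ * T) 1 * ξ ^ (-2 : ℝ)) :=
        (ofReal_integral_eq_lintegral_ofReal hInt hnn).symm
end
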